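/- In the halfspace intersection formula for constrained zonotopes, the new internal factor β is uniquely determined by α: for any α ∈ [-1,1]^{n_g} with Aα = b and hᵀ(c + Gα) ≤ ζ, setting β = (ζ − hᵀc − d_m/2 − hᵀGα)/(d_m/2) (assuming d_m > 0) gives β ∈ [-1,1] and satisfies the appended constraint row hᵀGα + (d_m/2)β = ζ − hᵀc − d_m/2. -/
import Mathlib


open Matrix

/-- In the halfspace intersection formula for constrained zonotopes, the new
internal factor `β` is determined by `α`: for `α ∈ [-1,1]^{n_g}` with
`Aα = b` and `hᵀ(c + Gα) ≤ ζ`, setting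
`β = (ζ − hᵀc − d_m/2 − hᵀGα)/(d_m/2)` (with `d_m > 0`) gives `β ∈ [-1,1]`
and `hᵀGα + (d_m/2)β = ζ − hᵀc − d_m/2`. -/
theorem conZono_halfspace_beta {n ng m : ℕ} (c : Fin n → ℝ)
    (G : Matrix (Fin n) (Fin ng) ℝ) (A : Matrix (Fin m) (Fin ng) ℝ) (b : Fin m → ℝ)
    (h : Fin n → ℝ) (ζ : ℝ) (dm : ℝ)
    (hdm : dm = ζ - h ⬝ᵥ c + ∑ i, |Matrix.vecMul h G i|)
    (hpos : 0 < dm)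
    (α : Fin ng → ℝ) (hα : ∀ i, |α i| ≤ 1) (hAb : A.mulVec α = b)
    (hin : h ⬝ᵥ (c + G.mulVec α) ≤ ζ)
    (β : ℝ) (hβ : β = (ζ - h ⬝ᵥ c - dm / 2 - h ⬝ᵥ G.mulVec α) / (dm / 2)) :
    |β| ≤ 1 ∧ h ⬝ᵥ G.mulVec α + (dm / 2) * β = ζ - h ⬝ᵥ c - dm / 2 := by
  have hs : h ⬝ᵥ G.mulVec α = ∑ i, Matrix.vecMul h G i * α i := by
    rw [Matrix.dotProduct_mulVec]; rfl
  have hbound : |h ⬝ᵥ G.mulVec α| ≤ ∑ i, |Matrix.vecMul h G i| := by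
    rw [hs]
    calc |∑ i, Matrix.vecMul h G i * α i| ≤ ∑ i, |Matrix.vecMul h G i * α i| :=
          Finset.abs_sum_le_sum_abs _ _
      _ ≤ ∑ i, |Matrix.vecMul h G i| := by
          apply Finset.sum_le_sum
          intro i _
          rw [abs_mul]
          nlinarith [abs_nonneg (Matrix.vecMul h G i), hα i, abs_nonneg (α i)]
  have hin' : h ⬝ᵥ c + h ⬝ᵥ G.mulVec α ≤ ζ := by
    rwa [dotProduct_add] at hin
  have hlo : -(∑ i, |Matrix.vecMul h G i|) ≤ h ⬝ᵥ G.mulVec α := (abs_le.mp hbound).1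
  have hd2 : 0 < dm / 2 := by linarith
  constructor
  · rw [hβ, abs_div, abs_of_pos hd2, div_le_one hd2, abs_le]
    constructor <;> [linarith; linarith [hdm ▸ hpos]]
  · rw [hβ]
    field_simp
    ring
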